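/- arXiv:2105.10291 — 6 statements merged into one kernel-verified Lean document; each statement's English description precedes it below -/
import Mathlib

section
/- If x₁(t) = x(t) + y(t) where (x,y,v,z,w) is a nonnegative solution of the HIV system, and δ = min(d, a) > 0, then x₁ satisfies x₁'(t) ≤ λ - δ x₁(t), and consequently x₁(t) ≤ x₁(0) e^{-δ t} + (λ/δ)(1 - e^{-δ t}) ≤ x₁(0) + λ/δ for all t ≥ 0. -/
open Real

/-- Boundedness of x + y for the HIV system. -/
theorem hiv_x_plus_y_bound
    (lam d beta a p N mu q c h g alpha : ℝ)
    (hlam : 0 ≤ lam) (hd : 0 < d) (hbeta : 0 ≤ beta) (ha : 0 < a)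
    (hp : 0 ≤ p) (hN : 0 ≤ N) (hmu : 0 ≤ mu) (hq : 0 ≤ q)
    (hc : 0 ≤ c) (hh : 0 ≤ h) (hg : 0 ≤ g) (halpha : 0 ≤ alpha)
    (x y v z w : ℝ → ℝ)
    (hx : ∀ t, 0 ≤ t → HasDerivAt x (lam - d * x t - beta * x t * v t) t)
    (hy : ∀ t, 0 ≤ t → HasDerivAt y (beta * x t * v t - a * y t - p * y t * z t) t)
    (hv : ∀ t, 0 ≤ t → HasDerivAt v (a * N * y t - mu * v t - q * v t * w t) t)
    (hz : ∀ t, 0 ≤ t → HasDerivAt z (c * x t * y t * z t - h * z t) t)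
    (hw : ∀ t, 0 ≤ t → HasDerivAt w (g * x t * v t * w t - alpha * w t) t)
    (hpos : ∀ t, 0 ≤ t → 0 ≤ x t ∧ 0 ≤ y t ∧ 0 ≤ v t ∧ 0 ≤ z t ∧ 0 ≤ w t)
    (x₁ : ℝ → ℝ) (hx₁ : ∀ t, x₁ t = x t + y t)
    (δ : ℝ) (hδ : δ = min d a) :
    (∀ t, 0 ≤ t → deriv x₁ t ≤ lam - δ * x₁ t) ∧
    (∀ t, 0 ≤ t →
      x₁ t ≤ x₁ 0 * exp (-δ * t) + (lam / δ) * (1 - exp (-δ * t)) ∧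
      x₁ 0 * exp (-δ * t) + (lam / δ) * (1 - exp (-δ * t)) ≤ x₁ 0 + lam / δ) := by
  have hδpos : 0 < δ := hδ ▸ lt_min hd ha
  have hδd : δ ≤ d := hδ ▸ min_le_left d a
  have hδa : δ ≤ a := hδ ▸ min_le_right d a
  have hx1f : x₁ = fun s => x s + y s := funext hx₁
  have hD : ∀ t, 0 ≤ t →
      HasDerivAt x₁ (lam - d * x t - a * y t - p * y t * z t) t := by
    intro t ht
    have := (hx t ht).add (hy t ht)
    rw [hx1f]
    refine this.congr_deriv ?_
    ring
  -- derivative bound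
  have key : ∀ t, 0 ≤ t → deriv x₁ t ≤ lam - δ * x₁ t := by
    intro t ht
    obtain ⟨hxp, hyp, hvp, hzp, hwp⟩ := hpos t ht
    rw [(hD t ht).deriv, hx₁]
    nlinarith [mul_nonneg (mul_nonneg hp hyp) hzp,
      mul_le_mul_of_nonneg_right hδd hxp, mul_le_mul_of_nonneg_right hδa hyp]
  refine ⟨key, fun t ht => ?_⟩
  obtain ⟨hx0, hy0, _, _, _⟩ := hpos 0 le_rfl
  have hx10 : 0 ≤ x₁ 0 := by rw [hx₁]; linarith
  have hlamδ : 0 ≤ lam / δ := div_nonneg hlam hδpos.le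
  constructor
  · -- Gronwall via auxiliary function g₁ s = (x₁ s - lam/δ) * exp (δ s)
    set g₁ : ℝ → ℝ := fun s => (x₁ s - lam / δ) * exp (δ * s) with hg₁
    have hgD : ∀ s, 0 ≤ s → HasDerivAt g₁
        ((lam - d * x s - a * y s - p * y s * z s + δ * (x₁ s - lam / δ)) * exp (δ * s)) s := by
      intro s hs
      have h1 := ((hD s hs).sub_const (lam / δ)).mul
        (((hasDerivAt_id s).const_mul δ).exp)
      simp only [id_eq] at h1
      refine h1.congr_deriv ?_
      ring
    have hanti : AntitoneOn g₁ (Set.Icc 0 t) := by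
      apply antitoneOn_of_deriv_nonpos (convex_Icc 0 t)
      · intro s hs
        exact ((hgD s hs.1).continuousAt).continuousWithinAt
      · intro s hs
        rw [interior_Icc] at hs
        exact (hgD s hs.1.le).differentiableAt.differentiableWithinAt
      · intro s hs
        rw [interior_Icc] at hs
        obtain ⟨hxp, hyp, hvp, hzp, hwp⟩ := hpos s hs.1.le
        rw [(hgD s hs.1.le).deriv]
        have hx1s : x₁ s = x s + y s := hx₁ s
        have he : 0 < exp (δ * s) := exp_pos _
        have hnum : lam - d * x s - a * y s - p * y s * z s + δ * (x₁ s - lam / δ) ≤ 0 := by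
          rw [hx1s]
          have : δ * (lam / δ) = lam := by field_simp
          nlinarith [mul_nonneg (mul_nonneg hp hyp) hzp,
            mul_le_mul_of_nonneg_right hδd hxp, mul_le_mul_of_nonneg_right hδa hyp]
        exact mul_nonpos_of_nonpos_of_nonneg hnum he.le
    have hineq : g₁ t ≤ g₁ 0 := hanti (Set.left_mem_Icc.2 ht) ⟨ht, le_rfl⟩ ht
    simp only [hg₁, mul_zero, exp_zero, mul_one] at hineq
    have he : 0 < exp (δ * t) := exp_pos _
    have hinv : exp (-δ * t) * exp (δ * t) = 1 := by
      rw [← exp_add]; ring_nf; exact exp_zero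
    have hinvpos : 0 < exp (-δ * t) := exp_pos _
    nlinarith [mul_le_mul_of_nonneg_left hineq hinvpos.le]
  · have he1 : exp (-δ * t) ≤ 1 := by
      apply exp_le_one_iff.2
      nlinarith
    have hepos : 0 < exp (-δ * t) := exp_pos _
    nlinarith [mul_le_mul_of_nonneg_left he1 hx10]
end

section
/- The characteristic polynomial of the Jacobian matrix of the HIV system at the disease-free equilibrium E_f = (λ/d,0,0,0,0) equals (ξ+d)(ξ+α)(ξ+h)(ξ² + (a+μ)ξ + a μ(1 - R₀)), where R₀ = λ N β /(d μ). -/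
open Matrix

/-- The characteristic polynomial of the Jacobian at the disease-free equilibrium. -/
theorem hiv_charpoly_disease_free
    (lam beta a N d mu h alpha : ℝ) (hd : 0 < d) (hmu : 0 < mu)
    (R₀ : ℝ) (hR₀ : R₀ = lam * N * beta / (d * mu))
    (J : Matrix (Fin 5) (Fin 5) ℝ)
    (hJ : J = !![-d, 0, -(beta * lam / d), 0, 0;
                 0, -a, beta * lam / d, 0, 0;
                 0, a * N, -mu, 0, 0;
                 0, 0, 0, -h, 0;
                 0, 0, 0, 0, -alpha]) :
    ∀ ξ : ℝ, (ξ • (1 : Matrix (Fin 5) (Fin 5) ℝ) - J).det =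
      (ξ + d) * (ξ + alpha) * (ξ + h) * (ξ ^ 2 + (a + mu) * ξ + a * mu * (1 - R₀)) := by
  intro ξ
  subst hJ hR₀
  have h1 : ξ • (1 : Matrix (Fin 5) (Fin 5) ℝ) -
      !![-d, 0, -(beta * lam / d), 0, 0;
         0, -a, beta * lam / d, 0, 0;
         0, a * N, -mu, 0, 0;
         0, 0, 0, -h, 0;
         0, 0, 0, 0, -alpha] =
      !![ξ + d, 0, beta * lam / d, 0, 0;
         0, ξ + a, -(beta * lam / d), 0, 0;
         0, -(a * N), ξ + mu, 0, 0;
         0, 0, 0, ξ + h, 0;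
         0, 0, 0, 0, ξ + alpha] := by
    ext i j
    fin_cases i <;> fin_cases j <;>
      simp [Matrix.smul_apply, Matrix.one_apply, Matrix.vecHead, Matrix.vecTail] <;> ring
  rw [h1]
  simp [Matrix.det_succ_row_zero, Fin.sum_univ_succ, Fin.succAbove]
  field_simp
  ring
end

section
/- Assume λμc - aNβh > 0. Then E₂ = (x₂, y₂, v₂, z₂, 0) with x₂ = (λμc - aNβh)/(dμc), y₂ = dhμ/(λμc - aNβh), v₂ = aNdh/(λμc - aNβh), z₂ = (a/p)(R^{CTL} - 1), where R^{CTL} = (Nβ/μ)·(λμc - aNβh)/(dμc), is an equilibrium of the HIV system provided R^{CTL} ≥ 1. -/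
/-- E₂ is an equilibrium of the HIV system. -/
theorem hiv_E2_equilibrium
    (lam d beta a p N mu q c h g alpha : ℝ)
    (hlam : 0 < lam) (hd : 0 < d) (hbeta : 0 < beta) (ha : 0 < a)
    (hp : 0 < p) (hN : 0 < N) (hmu : 0 < mu) (hq : 0 < q)
    (hc : 0 < c) (hh : 0 < h) (hg : 0 < g) (halpha : 0 < alpha)
    (hpos : lam * mu * c - a * N * beta * h > 0)
    (RCTL : ℝ)
    (hRCTL : RCTL = (N * beta / mu) * ((lam * mu * c - a * N * beta * h) / (d * mu * c)))
    (hRCTL1 : RCTL ≥ 1)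
    (x₂ y₂ v₂ z₂ : ℝ)
    (hx₂ : x₂ = (lam * mu * c - a * N * beta * h) / (d * mu * c))
    (hy₂ : y₂ = d * h * mu / (lam * mu * c - a * N * beta * h))
    (hv₂ : v₂ = a * N * d * h / (lam * mu * c - a * N * beta * h))
    (hz₂ : z₂ = (a / p) * (RCTL - 1)) :
    lam - d * x₂ - beta * x₂ * v₂ = 0 ∧
    beta * x₂ * v₂ - a * y₂ - p * y₂ * z₂ = 0 ∧
    a * N * y₂ - mu * v₂ - q * v₂ * 0 = 0 ∧
    c * x₂ * y₂ * z₂ - h * z₂ = 0 ∧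
    g * x₂ * v₂ * 0 - alpha * 0 = 0 := by
  have hD : lam * mu * c - a * N * beta * h ≠ 0 := ne_of_gt hpos
  have hdne : d ≠ 0 := ne_of_gt hd
  have hmune : mu ≠ 0 := ne_of_gt hmu
  have hcne : c ≠ 0 := ne_of_gt hc
  have hpne : p ≠ 0 := ne_of_gt hp
  subst hRCTL hx₂ hy₂ hv₂ hz₂
  refine ⟨?_, ?_, ?_, ?_, ?_⟩
  case refine_4 =>
    have hxy : c * ((lam * mu * c - a * N * beta * h) / (d * mu * c)) * (d * h * mu / (lam * mu * c - a * N * beta * h)) = h := by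
      field_simp
      exact div_self (by intro h0; apply hD; linarith)
    rw [hxy]; ring
  all_goals field_simp <;> ring
end

section
/- Assume λg - αβ > 0. Then E₃ = (x₃, y₃, v₃, 0, w₃) with x₃ = (λg - αβ)/(dg), y₃ = αβ/(ag), v₃ = αd/(λg - αβ), w₃ = (μ/q)(R^W - 1), where R^W = Nβ(λg - αβ)/(μ d g), is an equilibrium of the HIV system provided R^W ≥ 1. -/
/-- E₃ is an equilibrium of the HIV system. -/
theorem hiv_E3_equilibrium
    (lam d beta a p N mu q c h g alpha : ℝ)
    (hlam : 0 < lam) (hd : 0 < d) (hbeta : 0 < beta) (ha : 0 < a)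
    (hp : 0 < p) (hN : 0 < N) (hmu : 0 < mu) (hq : 0 < q)
    (hc : 0 < c) (hh : 0 < h) (hg : 0 < g) (halpha : 0 < alpha)
    (hpos : lam * g - alpha * beta > 0)
    (RW : ℝ) (hRW : RW = N * beta * (lam * g - alpha * beta) / (mu * d * g))
    (hRW1 : RW ≥ 1)
    (x₃ y₃ v₃ w₃ : ℝ)
    (hx₃ : x₃ = (lam * g - alpha * beta) / (d * g))
    (hy₃ : y₃ = alpha * beta / (a * g))
    (hv₃ : v₃ = alpha * d / (lam * g - alpha * beta))
    (hw₃ : w₃ = (mu / q) * (RW - 1)) :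
    lam - d * x₃ - beta * x₃ * v₃ = 0 ∧
    beta * x₃ * v₃ - a * y₃ - p * y₃ * 0 = 0 ∧
    a * N * y₃ - mu * v₃ - q * v₃ * w₃ = 0 ∧
    c * x₃ * y₃ * 0 - h * 0 = 0 ∧
    g * x₃ * v₃ * w₃ - alpha * w₃ = 0 := by
  have h1 : lam * g - alpha * beta ≠ 0 := ne_of_gt hpos
  have h2 : d ≠ 0 := hd.ne'
  have h3 : g ≠ 0 := hg.ne'
  have h4 : a ≠ 0 := ha.ne'
  have h5 : mu ≠ 0 := hmu.ne'
  have h6 : q ≠ 0 := hq.ne'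
  subst hx₃ hy₃ hv₃ hw₃ hRW
  have h7 : lam * g - beta * alpha ≠ 0 := by rwa [mul_comm beta alpha]
  have h8 : g * lam - alpha * beta ≠ 0 := by rwa [mul_comm g lam]
  refine ⟨?_, ?_, ?_, ?_, ?_⟩ <;> field_simp <;> ring
end

section
/- Assume λg - αβ > 0, R₁ = aNhg/(αμc) ≥ 1, and R₂ = αβc(λg - αβ)/(ahdg²) ≥ 1. Then E₄ = (x₄, y₄, v₄, z₄, w₄) with x₄ = (λg - αβ)/(dg), y₄ = hdg/(c(λg - αβ)), v₄ = αd/(λg - αβ), z₄ = (a/p)(R₂ - 1), w₄ = (μ/q)(R₁ - 1), is an equilibrium of the HIV system: all five right-hand sides vanish at E₄. -/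
/-- E₄ is an equilibrium of the HIV system. -/
theorem hiv_E4_equilibrium
    (lam d beta a p N mu q c h g alpha : ℝ)
    (hlam : 0 < lam) (hd : 0 < d) (hbeta : 0 < beta) (ha : 0 < a)
    (hp : 0 < p) (hN : 0 < N) (hmu : 0 < mu) (hq : 0 < q)
    (hc : 0 < c) (hh : 0 < h) (hg : 0 < g) (halpha : 0 < alpha)
    (hpos : lam * g - alpha * beta > 0)
    (R₁ R₂ : ℝ)
    (hR₁ : R₁ = a * N * h * g / (alpha * mu * c)) (hR₁1 : R₁ ≥ 1)
    (hR₂ : R₂ = alpha * beta * c * (lam * g - alpha * beta) / (a * h * d * g ^ 2))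
    (hR₂1 : R₂ ≥ 1)
    (x₄ y₄ v₄ z₄ w₄ : ℝ)
    (hx₄ : x₄ = (lam * g - alpha * beta) / (d * g))
    (hy₄ : y₄ = h * d * g / (c * (lam * g - alpha * beta)))
    (hv₄ : v₄ = alpha * d / (lam * g - alpha * beta))
    (hz₄ : z₄ = (a / p) * (R₂ - 1))
    (hw₄ : w₄ = (mu / q) * (R₁ - 1)) :
    lam - d * x₄ - beta * x₄ * v₄ = 0 ∧
    beta * x₄ * v₄ - a * y₄ - p * y₄ * z₄ = 0 ∧
    a * N * y₄ - mu * v₄ - q * v₄ * w₄ = 0 ∧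
    c * x₄ * y₄ * z₄ - h * z₄ = 0 ∧
    g * x₄ * v₄ * w₄ - alpha * w₄ = 0 := by
  have hS : lam * g - alpha * beta ≠ 0 := ne_of_gt hpos
  have hS' : g * lam - alpha * beta ≠ 0 := by rw [mul_comm]; exact hS
  subst hR₁ hR₂ hx₄ hy₄ hv₄ hz₄ hw₄
  refine ⟨?_, ?_, ?_, ?_, ?_⟩ <;>
    field_simp <;> ring
end

section
/- For the cubic ξ³ + A₁ξ² + B₁ξ + C₁ with A₁ = a + μ + dR₀, B₁ = ad + μdR₀ + ad(R₀-1), C₁ = adμ(R₀-1), where a, d, μ > 0 and R₀ > 1, the Routh–Hurwitz conditions A₁ > 0, C₁ > 0, and A₁B₁ - C₁ > 0 hold, hence all roots have negative real part. -/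
/-- Routh–Hurwitz conditions hold for the cubic factor at E₁, hence all its roots
have negative real part. -/
theorem hiv_E1_cubic_stable
    (a d mu R₀ : ℝ) (ha : 0 < a) (hd : 0 < d) (hmu : 0 < mu) (hR₀ : 1 < R₀)
    (A₁ B₁ C₁ : ℝ)
    (hA₁ : A₁ = a + mu + d * R₀)
    (hB₁ : B₁ = a * d + mu * d * R₀ + a * d * (R₀ - 1))
    (hC₁ : C₁ = a * d * mu * (R₀ - 1)) :
    0 < A₁ ∧ 0 < C₁ ∧ A₁ * B₁ - C₁ > 0 ∧
    (∀ ξ : ℂ, ξ ^ 3 + (A₁:ℂ) * ξ ^ 2 + (B₁:ℂ) * ξ + (C₁:ℂ) = 0 → ξ.re < 0) := by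
  have hA : 0 < A₁ := by nlinarith
  have hR : (0:ℝ) < R₀ := lt_trans one_pos hR₀
  have hR1 : (0:ℝ) < R₀ - 1 := by linarith
  have hB : 0 < B₁ := by nlinarith [mul_pos ha hd, mul_pos (mul_pos hmu hd) hR, mul_pos (mul_pos ha hd) hR1]
  have hC : 0 < C₁ := by nlinarith [mul_pos (mul_pos (mul_pos ha hd) hmu) hR1]
  have hAB : A₁ * B₁ - C₁ > 0 := by nlinarith [mul_pos (mul_pos (mul_pos hd hR) ha) ha, mul_pos (mul_pos (mul_pos hd hR) hmu) hmu, mul_pos (mul_pos (mul_pos hd hR) ha) hmu, mul_pos (mul_pos (mul_pos (mul_pos hd hR) hd) hR) ha, mul_pos (mul_pos (mul_pos (mul_pos hd hR) hd) hR) hmu, mul_pos (mul_pos (mul_pos ha hd) hmu) hR, mul_pos (mul_pos ha hd) hmu, sq_nonneg (a - mu)]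
  refine ⟨hA, hC, hAB, fun ξ hξ => ?_⟩
  by_contra hx
  push_neg at hx
  set x := ξ.re with hxd
  set y := ξ.im with hyd
  have h1 : (ξ ^ 3 + (A₁:ℂ) * ξ ^ 2 + (B₁:ℂ) * ξ + (C₁:ℂ)).re = 0 := by rw [hξ]; simp
  have h2 : (ξ ^ 3 + (A₁:ℂ) * ξ ^ 2 + (B₁:ℂ) * ξ + (C₁:ℂ)).im = 0 := by rw [hξ]; simp
  simp only [pow_succ, pow_zero, one_mul, Complex.add_re, Complex.add_im, Complex.mul_re,
    Complex.mul_im, Complex.ofReal_re, Complex.ofReal_im, ← hxd, ← hyd] at h1 h2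
  rcases eq_or_ne y 0 with hy | hy
  · rw [hy] at h1
    nlinarith [sq_nonneg x, mul_nonneg (mul_nonneg hx hx) hx]
  · have hy2 : y ^ 2 = 3 * x ^ 2 + 2 * A₁ * x + B₁ := by
      have : y * (3 * x ^ 2 + 2 * A₁ * x + B₁ - y ^ 2) = 0 := by ring_nf; ring_nf at h2; linarith
      rcases mul_eq_zero.mp this with h | h
      · exact absurd h hy
      · linarith
    nlinarith [sq_nonneg x, sq_nonneg y, mul_nonneg hx (sq_nonneg y), mul_nonneg hx hx, mul_nonneg (mul_nonneg hx hx) hx, mul_nonneg (mul_nonneg hA.le hx) hx, mul_nonneg hB.le hx, mul_nonneg (mul_nonneg hA.le hA.le) hx]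
end
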